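/- arXiv:math/0701105 — 2 statements merged into one kernel-verified Lean document; each statement's English description precedes it below -/
import Mathlib

section
/- Assume the abc conjecture over ℚ: for every ε > 0 there exists C > 0 such that for all coprime integers a, b, c with a + b + c = 0, max(|a|,|b|,|c|) ≤ C · (∏_{p | abc} p)^{1+ε}. Let n₀, n₁, n_∞ be positive integers with 1/n₀ + 1/n₁ + 1/n_∞ < 1. Then there are only finitely many pairs of coprime integers (a, c) such that (with b = c − a) every prime dividing a divides it to order ≥ n₀, every prime dividing b divides it to order ≥ n₁, and every prime dividing c divides it to order ≥ n_∞. -/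
set_option linter.unusedVariables false
set_option linter.unnecessarySimpa false

lemma rad_pow_dvd' (m n : ℕ) (hm : m ≠ 0) (h : ∀ p, p.Prime → p ∣ m → p ^ n ∣ m) :
    (∏ p ∈ m.primeFactors, p) ^ n ∣ m := by
  have hrad0 : (∏ p ∈ m.primeFactors, p) ≠ 0 :=
    Finset.prod_ne_zero_iff.2 fun p hp => (Nat.prime_of_mem_primeFactors hp).ne_zero
  rcases Nat.eq_zero_or_pos n with rfl | hn
  · simpa using Nat.one_dvd m
  rw [← Nat.factorization_le_iff_dvd (pow_ne_zero _ hrad0) hm]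
  intro q
  rw [Nat.factorization_pow, Nat.factorization_prod
    (fun p hp => (Nat.prime_of_mem_primeFactors hp).ne_zero)]
  simp only [Finsupp.smul_apply, Finsupp.finset_sum_apply, smul_eq_mul]
  have key : ∀ p ∈ m.primeFactors, (Nat.factorization p) q = if p = q then 1 else 0 := by
    intro p hp
    rw [(Nat.prime_of_mem_primeFactors hp).factorization, Finsupp.single_apply]
  rw [Finset.sum_congr rfl key, Finset.sum_ite_eq']
  by_cases hq : q ∈ m.primeFactors
  · rw [if_pos hq, mul_one]
    have hqp := Nat.prime_of_mem_primeFactors hq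
    exact (Nat.Prime.pow_dvd_iff_le_factorization hqp hm).1
      (h q hqp (Nat.dvd_of_mem_primeFactors hq))
  · simp [hq]

lemma rad_mul_dvd' (x y : ℕ) :
    (∏ p ∈ (x * y).primeFactors, p) ∣
      (∏ p ∈ x.primeFactors, p) * (∏ p ∈ y.primeFactors, p) := by
  have hsub : (x * y).primeFactors ⊆ x.primeFactors ∪ y.primeFactors := by
    intro p hp
    have hp' := Nat.prime_of_mem_primeFactors hp
    have hxy : x * y ≠ 0 := by
      intro h0; rw [h0] at hp; simp at hp
    rcases hp'.dvd_mul.1 (Nat.dvd_of_mem_primeFactors hp) with h | h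
    · exact Finset.mem_union_left _ (Nat.mem_primeFactors.2 ⟨hp', h, fun h0 => hxy (by simp [h0])⟩)
    · exact Finset.mem_union_right _ (Nat.mem_primeFactors.2 ⟨hp', h, fun h0 => hxy (by simp [h0])⟩)
  calc (∏ p ∈ (x * y).primeFactors, p)
      ∣ ∏ p ∈ x.primeFactors ∪ y.primeFactors, p :=
        Finset.prod_dvd_prod_of_subset _ _ _ hsub
    _ ∣ (∏ p ∈ x.primeFactors, p) * (∏ p ∈ y.primeFactors, p) := by
        rw [← Finset.prod_union_inter]
        exact Dvd.intro _ rfl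

lemma pow_root_le' {r x M : ℝ} {n : ℕ} (hn : 0 < n) (hr : 0 ≤ r)
    (h : r ^ n ≤ x) (hxM : x ≤ M) : r ≤ M ^ (1 / (n : ℝ)) := by
  have hn' : (0:ℝ) < n := by exact_mod_cast hn
  have h1 : (r ^ n : ℝ) ^ (1 / (n:ℝ)) ≤ M ^ (1 / (n:ℝ)) :=
    Real.rpow_le_rpow (by positivity) (h.trans hxM) (by positivity)
  rwa [← Real.rpow_natCast r n, ← Real.rpow_mul hr, mul_one_div, div_self hn'.ne',
    Real.rpow_one] at h1

/-- Assuming the abc conjecture over ℚ, if `1/n₀ + 1/n₁ + 1/nInf < 1` then there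
are only finitely many pairs of coprime integers `(a, c)` such that (with
`b = c - a`) every prime divides `a`, `b`, `c` to order at least `n₀`, `n₁`,
`nInf` respectively. -/
theorem stmt_1
    (abc : ∀ ε : ℝ, 0 < ε → ∃ C : ℝ, 0 < C ∧ ∀ a b c : ℤ,
      a ≠ 0 → b ≠ 0 → c ≠ 0 → a + b + c = 0 → Int.gcd (Int.gcd a b) c = 1 →
      (max |(a : ℝ)| (max |(b : ℝ)| |(c : ℝ)|)) ≤
        C * (∏ p ∈ (a * b * c).natAbs.primeFactors, (p : ℝ)) ^ (1 + ε))
    (n₀ n₁ nInf : ℕ) (hn₀ : 0 < n₀) (hn₁ : 0 < n₁) (hnInf : 0 < nInf)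
    (hlt : (1 / n₀ + 1 / n₁ + 1 / nInf : ℝ) < 1) :
    {ac : ℤ × ℤ | ac.1 ≠ 0 ∧ ac.2 ≠ 0 ∧ ac.2 - ac.1 ≠ 0 ∧
      Int.gcd ac.1 ac.2 = 1 ∧
      (∀ p : ℕ, p.Prime → (p : ℤ) ∣ ac.1 → (p : ℤ) ^ n₀ ∣ ac.1) ∧
      (∀ p : ℕ, p.Prime → (p : ℤ) ∣ (ac.2 - ac.1) → (p : ℤ) ^ n₁ ∣ (ac.2 - ac.1)) ∧
      (∀ p : ℕ, p.Prime → (p : ℤ) ∣ ac.2 → (p : ℤ) ^ nInf ∣ ac.2)}.Finite := by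
  set s : ℝ := (1 / n₀ + 1 / n₁ + 1 / nInf : ℝ) with hs_def
  have hs_pos : 0 < s := by
    have h0 : (0:ℝ) < n₀ := by exact_mod_cast hn₀
    have h1 : (0:ℝ) < n₁ := by exact_mod_cast hn₁
    have h2 : (0:ℝ) < nInf := by exact_mod_cast hnInf
    positivity
  clear_value s
  set ε : ℝ := (1 - s) / (2 * s) with hε_def
  have hε_pos : 0 < ε := div_pos (by linarith) (by linarith)
  clear_value ε
  obtain ⟨C, hC, habc⟩ := abc ε hε_pos
  set t : ℝ := (1 + ε) * s with ht_def
  have ht_eq : t = (1 + s) / 2 := by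
    rw [ht_def, hε_def]; field_simp; ring
  clear_value t
  have ht_lt : t < 1 := by rw [ht_eq]; linarith [hlt, hs_pos]
  have ht_pos : 0 < t := by rw [ht_eq]; linarith [hs_pos]
  set B : ℝ := C ^ (1 / (1 - t)) with hB_def
  -- main bound
  have main : ∀ ac : ℤ × ℤ, ac ∈ {ac : ℤ × ℤ | ac.1 ≠ 0 ∧ ac.2 ≠ 0 ∧ ac.2 - ac.1 ≠ 0 ∧
      Int.gcd ac.1 ac.2 = 1 ∧
      (∀ p : ℕ, p.Prime → (p : ℤ) ∣ ac.1 → (p : ℤ) ^ n₀ ∣ ac.1) ∧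
      (∀ p : ℕ, p.Prime → (p : ℤ) ∣ (ac.2 - ac.1) → (p : ℤ) ^ n₁ ∣ (ac.2 - ac.1)) ∧
      (∀ p : ℕ, p.Prime → (p : ℤ) ∣ ac.2 → (p : ℤ) ^ nInf ∣ ac.2)} →
      |(ac.1 : ℝ)| ≤ B ∧ |(ac.2 : ℝ)| ≤ B := by
    rintro ⟨a, c⟩ ⟨ha, hc, hb, hgcd, hOa, hOb, hOc⟩
    simp only at ha hc hb hgcd hOa hOb hOc
    set b : ℤ := c - a with hb_def
    -- gcd condition
    have hgcd' : Int.gcd (Int.gcd a b) (-c) = 1 := by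
      rw [Int.gcd_neg]
      have h1 : (↑(Int.gcd ((Int.gcd a b : ℤ)) c) : ℤ) ∣ (Int.gcd a c : ℤ) := by
        apply Int.dvd_coe_gcd
        · exact dvd_trans (Int.gcd_dvd_left _ _) (by exact_mod_cast Int.gcd_dvd_left (a := a) (b := b))
        · exact Int.gcd_dvd_right _ _
      rw [hgcd] at h1
      have h2 : Int.gcd ((Int.gcd a b : ℤ)) c ∣ 1 := by exact_mod_cast h1
      exact Nat.dvd_one.mp h2
    have key := habc a b (-c) ha hb (neg_ne_zero.2 hc) (by ring) hgcd'
    -- abbreviations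
    set M : ℝ := max |(a : ℝ)| (max |(b : ℝ)| |((-c : ℤ) : ℝ)|) with hM_def
    have hM1 : (1:ℝ) ≤ M := by
      have : (1:ℝ) ≤ |(a:ℝ)| := by
        have := Int.one_le_abs ha; push_cast [← Int.cast_abs]; exact_mod_cast this
      exact le_trans this (le_max_left _ _)
    have hM0 : (0:ℝ) < M := lt_of_lt_of_le one_pos hM1
    -- radical bounds
    have hrad_le : ∀ (x : ℤ) (n : ℕ), 0 < n → x ≠ 0 →
        (∀ p : ℕ, p.Prime → (p : ℤ) ∣ x → (p : ℤ) ^ n ∣ x) →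
        |(x:ℝ)| ≤ M →
        ((∏ p ∈ x.natAbs.primeFactors, (p:ℕ) : ℕ) : ℝ) ≤ M ^ (1 / (n : ℝ)) := by
      intro x n hn hx hO hxM
      have hx' : x.natAbs ≠ 0 := Int.natAbs_ne_zero.2 hx
      have hdvd : (∏ p ∈ x.natAbs.primeFactors, p) ^ n ∣ x.natAbs := by
        apply rad_pow_dvd' _ _ hx'
        intro p hp hpx
        have : (p:ℤ) ∣ x := Int.natCast_dvd_natCast.2 hpx |>.trans (Int.natAbs_dvd.2 dvd_rfl)
        have h2 := hO p hp this
        have h3 : ((p ^ n : ℕ) : ℤ) ∣ x := by push_cast; exact h2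
        exact (Int.natCast_dvd_natCast (n := x.natAbs)).1 (by rwa [Int.dvd_natAbs])
      have hle : ((∏ p ∈ x.natAbs.primeFactors, p : ℕ) : ℝ) ^ n ≤ |(x:ℝ)| := by
        have := Nat.le_of_dvd (Nat.pos_of_ne_zero hx') hdvd
        have h2 : ((((∏ p ∈ x.natAbs.primeFactors, p) ^ n : ℕ) : ℝ)) ≤ ((x.natAbs : ℕ) : ℝ) := by
          exact_mod_cast this
        rw [Nat.cast_natAbs, Nat.cast_pow] at h2
        rwa [Int.cast_abs] at h2
      exact pow_root_le' hn (by positivity) hle hxM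
    have hMa : |(a:ℝ)| ≤ M := le_max_left _ _
    have hMb : |(b:ℝ)| ≤ M := le_trans (le_max_left _ _) (le_max_right _ _)
    have hMc : |((-c : ℤ):ℝ)| ≤ M := le_trans (le_max_right _ _) (le_max_right _ _)
    have hOc' : ∀ p : ℕ, p.Prime → (p : ℤ) ∣ (-c) → (p : ℤ) ^ nInf ∣ (-c) := by
      intro p hp hpc
      exact (dvd_neg).2 (hOc p hp ((dvd_neg).1 hpc))
    have hRa := hrad_le a n₀ hn₀ ha hOa hMa
    have hRb := hrad_le b n₁ hn₁ hb hOb hMb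
    have hRc := hrad_le (-c) nInf hnInf (neg_ne_zero.2 hc) hOc' hMc
    -- combine radicals
    have hsplit : ((∏ p ∈ (a * b * (-c)).natAbs.primeFactors, p : ℕ) : ℝ) ≤
        ((∏ p ∈ a.natAbs.primeFactors, p : ℕ) : ℝ) *
        ((∏ p ∈ b.natAbs.primeFactors, p : ℕ) : ℝ) *
        ((∏ p ∈ (-c : ℤ).natAbs.primeFactors, p : ℕ) : ℝ) := by
      have h1 : (a * b * (-c)).natAbs = a.natAbs * b.natAbs * (-c : ℤ).natAbs := by
        rw [Int.natAbs_mul, Int.natAbs_mul]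
      rw [h1]
      have hd : (∏ p ∈ (a.natAbs * b.natAbs * (-c : ℤ).natAbs).primeFactors, p) ∣
          (∏ p ∈ a.natAbs.primeFactors, p) * (∏ p ∈ b.natAbs.primeFactors, p) *
          (∏ p ∈ (-c : ℤ).natAbs.primeFactors, p) := by
        calc (∏ p ∈ (a.natAbs * b.natAbs * (-c : ℤ).natAbs).primeFactors, p)
            ∣ (∏ p ∈ (a.natAbs * b.natAbs).primeFactors, p) *
              (∏ p ∈ (-c : ℤ).natAbs.primeFactors, p) := rad_mul_dvd' _ _
          _ ∣ _ := mul_dvd_mul_right (rad_mul_dvd' _ _) _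
      have hppos : ∀ z : ℕ, 0 < ∏ p ∈ z.primeFactors, p := fun z =>
        Finset.prod_pos fun p hp => (Nat.prime_of_mem_primeFactors hp).pos
      have := Nat.le_of_dvd (mul_pos (mul_pos (hppos _) (hppos _)) (hppos _)) hd
      exact_mod_cast this
    -- R ≤ M ^ s
    have hR_le : ((∏ p ∈ (a * b * (-c)).natAbs.primeFactors, p : ℕ) : ℝ) ≤ M ^ s := by
      have h2 : M ^ (1/(n₀:ℝ)) * M ^ (1/(n₁:ℝ)) * M ^ (1/(nInf:ℝ)) = M ^ s := by
        rw [← Real.rpow_add hM0, ← Real.rpow_add hM0, hs_def]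
      calc ((∏ p ∈ (a * b * (-c)).natAbs.primeFactors, p : ℕ) : ℝ)
          ≤ _ := hsplit
        _ ≤ M ^ (1/(n₀:ℝ)) * M ^ (1/(n₁:ℝ)) * M ^ (1/(nInf:ℝ)) := by
            apply mul_le_mul (mul_le_mul hRa hRb (by positivity) (by positivity))
              hRc (by positivity) (by positivity)
        _ = M ^ s := h2
    -- conclude M ≤ C * M ^ t
    have hMt : M ≤ C * M ^ t := by
      have hexp : (0:ℝ) ≤ 1 + ε := by linarith
      have h1 : ((∏ p ∈ (a * b * (-c)).natAbs.primeFactors, (p:ℕ) : ℕ) : ℝ) ^ (1 + ε)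
          ≤ (M ^ s) ^ (1 + ε) := Real.rpow_le_rpow (by positivity) hR_le hexp
      have h2 : (M ^ s) ^ (1 + ε) = M ^ t := by
        rw [← Real.rpow_mul (le_of_lt hM0), ht_def]; ring_nf
      have hcast : (∏ p ∈ (a * b * (-c)).natAbs.primeFactors, ((p:ℕ):ℝ)) =
          ((∏ p ∈ (a * b * (-c)).natAbs.primeFactors, (p:ℕ) : ℕ) : ℝ) := by push_cast; rfl
      calc M ≤ C * (∏ p ∈ (a * b * (-c)).natAbs.primeFactors, ((p:ℕ):ℝ)) ^ (1 + ε) := key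
        _ ≤ C * M ^ t := by
            rw [hcast]
            exact mul_le_mul_of_nonneg_left (h2 ▸ h1) (le_of_lt hC)
    -- M ≤ B
    have hMB : M ≤ B := by
      have hMt_pos : (0:ℝ) < M ^ t := Real.rpow_pos_of_pos hM0 _
      have heq : M ^ (1 - t) * M ^ t = M := by
        rw [← Real.rpow_add hM0, sub_add_cancel, Real.rpow_one]
      have hmul : M ^ (1 - t) * M ^ t ≤ C * M ^ t := by rw [heq]; exact hMt
      have h1 : M ^ (1 - t) ≤ C := le_of_mul_le_mul_right hmul hMt_pos
      have h2 : (M ^ (1 - t)) ^ (1 / (1 - t)) ≤ C ^ (1 / (1 - t)) :=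
        Real.rpow_le_rpow (by positivity) h1 (one_div_nonneg.2 (by linarith))
      rwa [← Real.rpow_mul (le_of_lt hM0), mul_one_div, div_self (by linarith : (1:ℝ) - t ≠ 0),
        Real.rpow_one] at h2
    constructor
    · exact le_trans hMa hMB
    · have : |(c:ℝ)| = |((-c : ℤ):ℝ)| := by push_cast; rw [abs_neg]
      rw [this]; exact le_trans hMc hMB
  -- finiteness from the bound
  set N : ℤ := ⌈B⌉ with hN_def
  apply Set.Finite.subset (Set.finite_Icc ((-N, -N) : ℤ × ℤ) (N, N))
  intro ac hac
  obtain ⟨h1, h2⟩ := main ac hac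
  have hb1 : |ac.1| ≤ N := by
    have : (|ac.1| : ℝ) ≤ (N : ℝ) := by
      rw [← Int.cast_abs] at h1 ⊢
      exact le_trans h1 (le_trans (Int.le_ceil B) (by rfl))
    exact_mod_cast this
  have hb2 : |ac.2| ≤ N := by
    have : (|ac.2| : ℝ) ≤ (N : ℝ) := by
      rw [← Int.cast_abs] at h2 ⊢
      exact le_trans h2 (le_trans (Int.le_ceil B) (by rfl))
    exact_mod_cast this
  rw [Set.mem_Icc]
  obtain ⟨h1a, h1b⟩ := abs_le.1 hb1
  obtain ⟨h2a, h2b⟩ := abs_le.1 hb2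
  exact ⟨⟨h1a, h2a⟩, ⟨h1b, h2b⟩⟩
end

section
/- The abc conjecture over ℚ implies asymptotic Fermat: for every ε > 0 there exists N₀ such that for all N ≥ N₀ there are no pairwise coprime positive integers a, b, c with a^N + b^N = c^N. -/
/-- The abc conjecture over ℚ implies asymptotic Fermat: there is `N₀` such that
for all `N ≥ N₀` there are no pairwise coprime positive integers `a, b, c`
with `a^N + b^N = c^N`. -/
theorem stmt_2
    (abc : ∀ ε : ℝ, 0 < ε → ∃ C : ℝ, 0 < C ∧ ∀ a b c : ℕ,
      0 < a → 0 < b → 0 < c → a + b = c →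
      Nat.gcd a b = 1 → Nat.gcd a c = 1 → Nat.gcd b c = 1 →
      (c : ℝ) ≤ C * (∏ p ∈ (a * b * c).primeFactors, (p : ℝ)) ^ (1 + ε)) :
    ∃ N₀ : ℕ, ∀ N ≥ N₀, ¬ ∃ a b c : ℕ, 0 < a ∧ 0 < b ∧ 0 < c ∧
      Nat.gcd a b = 1 ∧ Nat.gcd a c = 1 ∧ Nat.gcd b c = 1 ∧
      a ^ N + b ^ N = c ^ N := by
  obtain ⟨C, hC, h⟩ := abc 1 one_pos
  obtain ⟨n, hn⟩ := pow_unbounded_of_one_lt C (by norm_num : (1:ℝ) < 2)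
  refine ⟨n + 7, fun N hN ⟨a, b, c, ha, hb, hc, hab, hac, hbc, heq⟩ => ?_⟩
  have hN7 : 7 ≤ N := le_trans (by omega) hN
  have hNpos : N ≠ 0 := by omega
  -- apply abc to a^N, b^N, c^N
  have key := h (a ^ N) (b ^ N) (c ^ N) (pow_pos ha N) (pow_pos hb N) (pow_pos hc N)
    heq (Nat.Coprime.pow N N hab) (Nat.Coprime.pow N N hac) (Nat.Coprime.pow N N hbc)
  have hprod : a ^ N * b ^ N * c ^ N = (a * b * c) ^ N := by ring
  rw [hprod, Nat.primeFactors_pow _ hNpos] at key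
  -- bound the radical
  have habc_pos : 0 < a * b * c := by positivity
  have hrad_nat : (∏ p ∈ (a * b * c).primeFactors, p) ≤ a * b * c :=
    Nat.le_of_dvd habc_pos (Nat.prod_primeFactors_dvd _)
  have hrad : (∏ p ∈ (a * b * c).primeFactors, (p : ℝ)) ≤ ((a * b * c : ℕ) : ℝ) := by
    rw [← Nat.cast_prod]
    exact_mod_cast hrad_nat
  have hrad_nonneg : (0:ℝ) ≤ ∏ p ∈ (a * b * c).primeFactors, (p : ℝ) :=
    Finset.prod_nonneg fun p _ => by positivity
  -- a, b ≤ c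
  have hac' : a ≤ c := by
    have : a ^ N ≤ c ^ N := by omega
    exact (Nat.pow_le_pow_iff_left hNpos).mp this
  have hbc' : b ≤ c := by
    have : b ^ N ≤ c ^ N := by omega
    exact (Nat.pow_le_pow_iff_left hNpos).mp this
  have habc_le : a * b * c ≤ c ^ 3 := by
    calc a * b * c ≤ c * c * c := by gcongr
    _ = c ^ 3 := by ring
  have hrad3 : (∏ p ∈ (a * b * c).primeFactors, (p : ℝ)) ≤ (c : ℝ) ^ 3 := by
    refine hrad.trans ?_
    exact_mod_cast (Nat.cast_le (α := ℝ)).mpr habc_le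
  -- turn the rpow into a nat pow
  have h2 : ((c : ℕ) ^ N : ℝ) ≤ C * ((c : ℝ) ^ 3) ^ 2 := by
    have hr : (∏ p ∈ (a * b * c).primeFactors, (p : ℝ)) ^ (1 + 1 : ℝ)
        ≤ ((c : ℝ) ^ 3) ^ 2 := by
      rw [show (1 + 1 : ℝ) = ((2 : ℕ) : ℝ) by norm_num, Real.rpow_natCast]
      exact pow_le_pow_left₀ hrad_nonneg hrad3 2
    have key' : ((c : ℕ) ^ N : ℝ) ≤ C * (∏ p ∈ (a * b * c).primeFactors, (p : ℝ)) ^ (1 + 1 : ℝ) := by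
      exact_mod_cast key
    exact key'.trans (mul_le_mul_of_nonneg_left hr hC.le)
  have hc2 : 2 ≤ c := by
    by_contra hlt
    have hc1 : c = 1 := by omega
    have haN : 1 ≤ a ^ N := Nat.one_le_pow _ _ ha
    have hbN : 1 ≤ b ^ N := Nat.one_le_pow _ _ hb
    have hcN : c ^ N = 1 := by rw [hc1, one_pow]
    omega
  -- c^N = c^6 * c^(N-6)
  have hsplit : (c : ℝ) ^ N = (c : ℝ) ^ 6 * (c : ℝ) ^ (N - 6) := by
    rw [← pow_add]
    congr 1
    omega
  have hc6pos : (0:ℝ) < (c : ℝ) ^ 6 := by positivity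
  have h3 : (c : ℝ) ^ (N - 6) ≤ C := by
    have h2' : (c : ℝ) ^ 6 * (c : ℝ) ^ (N - 6) ≤ C * (c : ℝ) ^ 6 := by
      have : ((c : ℕ) ^ N : ℝ) = (c : ℝ) ^ N := by push_cast; ring
      rw [this, hsplit] at h2
      calc (c : ℝ) ^ 6 * (c : ℝ) ^ (N - 6) ≤ C * ((c : ℝ) ^ 3) ^ 2 := h2
        _ = C * (c : ℝ) ^ 6 := by ring
    have := (mul_le_mul_iff_of_pos_right hc6pos).mp (by linarith [h2'] : (c:ℝ) ^ (N-6) * (c:ℝ)^6 ≤ C * (c:ℝ)^6)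
    exact this
  have h4 : (2 : ℝ) ^ (N - 6) ≤ (c : ℝ) ^ (N - 6) := by
    apply pow_le_pow_left₀ (by norm_num)
    exact_mod_cast hc2
  have h5 : (2 : ℝ) ^ n ≤ (2 : ℝ) ^ (N - 6) :=
    pow_le_pow_right₀ (by norm_num) (by omega)
  linarith
end
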